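/- arXiv:0712.2293 — 4 statements merged into one kernel-verified Lean document; each statement's English description precedes it below -/
import Mathlib

section
/- For integers 0 ≤ p ≤ l, the polynomial identity Σ_{i=0}^{p} C(p,i)·C(l−p+i, i)·C(l,i)^{−1}·x^{p−i} = Σ_{j=0}^{p} C(p,j)·C(2l−p+1, j)·C(l,j)^{−1}·(x−1)^{p−j} holds in ℚ[x]. -/
open Finset Polynomial

-- partial alternating sum of binomial coefficients
lemma altsum (n : ℕ) : ∀ k : ℕ, ∑ j ∈ range (k+1), (-1:ℚ)^j * ((n+1).choose j) = (-1)^k * n.choose k := by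
  intro k
  induction k with
  | zero => simp
  | succ k ih =>
      rw [Finset.sum_range_succ, ih, Nat.choose_succ_succ' n k]
      push_cast
      ring

-- key alternating Vandermonde-type identity
lemma lemB : ∀ (l m i : ℕ), i ≤ l →
    ∑ j ∈ range (i+1), (-1:ℚ)^(i-j) * ((l+m+1).choose j) * ((l-j).choose (i-j))
      = ((m+i).choose i : ℚ) := by
  intro l
  induction l with
  | zero =>
      intro m i hi
      interval_cases i
      simp
  | succ l ih =>
      intro m i hi
      rcases Nat.lt_or_ge i (l+1) with hil | hil
      · -- i ≤ l
        have hi' : i ≤ l := Nat.lt_succ_iff.mp hil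
        have split : ∀ j ∈ range i,
            (-1:ℚ)^(i-j) * ((l+1+m+1).choose j) * ((l+1-j).choose (i-j))
            = (-1:ℚ)^(i-j) * ((l+(m+1)+1).choose j) * ((l-j).choose (i-j))
              + (-1:ℚ)^(i-j) * ((l+(m+1)+1).choose j) * ((l-j).choose (i-1-j)) := by
          intro j hj
          rw [Finset.mem_range] at hj
          have h1 : l + 1 - j = (l - j) + 1 := by omega
          have h2 : i - j = (i - 1 - j) + 1 := by omega
          have h3 : l + 1 + m + 1 = l + (m+1) + 1 := by omega
          rw [h1, h2, h3, Nat.choose_succ_succ']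
          push_cast
          ring
        rw [Finset.sum_range_succ, Finset.sum_congr rfl split, Finset.sum_add_distrib]
        have corner : ((-1:ℚ)^(i-i) * ((l+1+m+1).choose i) * ((l+1-i).choose (i-i)))
            = (-1:ℚ)^(i-i) * ((l+(m+1)+1).choose i) * ((l-i).choose (i-i)) := by
          simp [Nat.sub_self, show l+1+m+1 = l+(m+1)+1 from by omega]
        rw [corner, add_right_comm, ← Finset.sum_range_succ
          (fun j => (-1:ℚ)^(i-j) * ((l+(m+1)+1).choose j) * ((l-j).choose (i-j))) i]
        rcases Nat.eq_zero_or_pos i with rfl | hipos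
        · simp
        · have h4 : ∑ j ∈ range i, (-1:ℚ)^(i-j) * ((l+(m+1)+1).choose j) * ((l-j).choose (i-1-j))
              = - ∑ j ∈ range ((i-1)+1), (-1:ℚ)^((i-1)-j) * ((l+(m+1)+1).choose j) * ((l-j).choose ((i-1)-j)) := by
            rw [← Finset.sum_neg_distrib]
            apply Finset.sum_congr (by rw [Nat.sub_add_cancel hipos])
            intro j hj
            rw [Finset.mem_range] at hj
            have : i - j = ((i-1) - j) + 1 := by omega
            rw [this]
            ring
          rw [ih (m+1) i hi', h4, ih (m+1) (i-1) (by omega)]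
          have hp : (m+1+i).choose i = (m + 1 + (i-1)).choose (i-1) + (m+i).choose i := by
            have h5 : m + 1 + i = (m + i) + 1 := by omega
            have h6 : i = (i-1) + 1 := by omega
            rw [h5, h6, Nat.choose_succ_succ]
            congr 2 <;> omega
          rw [hp]
          push_cast
          ring
      · -- i = l + 1
        have : i = l + 1 := le_antisymm hi hil
        subst this
        have key : ∀ j ∈ range (l+1+1),
            (-1:ℚ)^(l+1-j) * ((l+1+m+1).choose j) * ((l+1-j).choose (l+1-j))
            = (-1:ℚ)^(l+1) * ((-1:ℚ)^j * (((l+1+m)+1).choose j)) := by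
          intro j hj
          rw [Finset.mem_range] at hj
          rw [Nat.choose_self]
          have : (-1:ℚ)^(l+1-j) = (-1:ℚ)^(l+1) * (-1:ℚ)^j := by
            have h2 : (l+1-j) + 2*j = (l+1) + j := by omega
            calc (-1:ℚ)^(l+1-j) = (-1:ℚ)^(l+1-j) * ((-1:ℚ)^2)^j := by simp
              _ = (-1:ℚ)^((l+1-j) + 2*j) := by rw [← pow_mul, ← pow_add]
              _ = _ := by rw [h2, pow_add]
          rw [this]
          push_cast
          ring
        rw [Finset.sum_congr rfl key, ← Finset.mul_sum, altsum (l+1+m) (l+1),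
          ← mul_assoc, ← pow_add, Even.neg_one_pow ⟨l+1, rfl⟩, one_mul,
          show l+1+m = m+(l+1) from by omega]

lemma natkey (l p i j : ℕ) (hj : j ≤ i) (hip : i ≤ p) (hpl : p ≤ l) :
    p.choose j * (p-j).choose (i-j) * l.choose i
      = p.choose i * ((l-j).choose (i-j) * l.choose j) := by
  have h1 := Nat.choose_mul (n := p) (k := i) hj   -- p.choose i * i.choose j = p.choose j * (p-j).choose (i-j)
  have h2 := Nat.choose_mul (n := l) (k := i) hj
  calc p.choose j * (p-j).choose (i-j) * l.choose i
      = (p.choose i * i.choose j) * l.choose i := by rw [h1]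
    _ = p.choose i * (l.choose i * i.choose j) := by ring
    _ = p.choose i * (l.choose j * (l-j).choose (i-j)) := by rw [h2]
    _ = _ := by ring

lemma lemC (l p i : ℕ) (hip : i ≤ p) (hpl : p ≤ l) :
    ∑ j ∈ range (i+1), (-1:ℚ)^(i-j)
        * ((p.choose j : ℚ) * ((2*l-p+1).choose j : ℚ) / (l.choose j : ℚ))
        * ((p-j).choose (i-j) : ℚ)
      = (p.choose i * (l-p+i).choose i : ℚ) / (l.choose i : ℚ) := by
  have hcli : (l.choose i : ℚ) ≠ 0 :=
    Nat.cast_ne_zero.mpr (Nat.choose_pos (le_trans hip hpl)).ne'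
  have step : ∀ j ∈ range (i+1),
      (-1:ℚ)^(i-j) * ((p.choose j : ℚ) * ((2*l-p+1).choose j : ℚ) / (l.choose j : ℚ))
        * ((p-j).choose (i-j) : ℚ)
      = (p.choose i : ℚ) / (l.choose i : ℚ)
          * ((-1:ℚ)^(i-j) * ((2*l-p+1).choose j : ℚ) * ((l-j).choose (i-j) : ℚ)) := by
    intro j hj
    rw [Finset.mem_range] at hj
    have hji : j ≤ i := by omega
    have hclj : (l.choose j : ℚ) ≠ 0 :=
      Nat.cast_ne_zero.mpr (Nat.choose_pos (show j ≤ l by omega)).ne'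
    have hkey : ((p.choose j : ℚ) * ((p-j).choose (i-j) : ℚ)) * (l.choose i : ℚ)
        = (p.choose i : ℚ) * (((l-j).choose (i-j) : ℚ) * (l.choose j : ℚ)) := by
      exact_mod_cast congrArg (Nat.cast : ℕ → ℚ) (natkey l p i j hji hip hpl)
    field_simp
    linear_combination ((((2*l-p+1).choose j : ℕ) : ℚ)) * hkey
  rw [Finset.sum_congr rfl step, ← Finset.mul_sum]
  have h2l : 2*l - p + 1 = l + (l-p) + 1 := by omega
  rw [h2l, lemB l (l-p) i (le_trans hip hpl)]
  have : (l-p) + i = l - p + i := rfl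
  rw [div_mul_eq_mul_div, mul_comm]

theorem hypergeometric_shift_identity (l p : ℕ) (hpl : p ≤ l) :
    ∑ i ∈ range (p + 1),
        C ((p.choose i * (l - p + i).choose i : ℚ) / (l.choose i : ℚ)) * X ^ (p - i)
      = ∑ j ∈ range (p + 1),
        C ((p.choose j * (2 * l - p + 1).choose j : ℚ) / (l.choose j : ℚ)) * (X - 1) ^ (p - j) := by
  set a : ℕ → ℚ := fun i => (p.choose i * (l - p + i).choose i : ℚ) / (l.choose i : ℚ) with ha
  set b : ℕ → ℚ := fun j => (p.choose j * (2 * l - p + 1).choose j : ℚ) / (l.choose j : ℚ) with hb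
  rw [← Finset.sum_range_reflect (fun i => C (a i) * X ^ (p - i)) (p+1),
      ← Finset.sum_range_reflect (fun j => C (b j) * (X - 1) ^ (p - j)) (p+1)]
  have L : ∀ k ∈ range (p+1),
      C (a (p + 1 - 1 - k)) * X ^ (p - (p + 1 - 1 - k)) = C (a (p - k)) * X ^ k := by
    intro k hk
    rw [Finset.mem_range] at hk
    have h1 : p + 1 - 1 - k = p - k := by omega
    have h2 : p - (p - k) = k := by omega
    rw [h1, h2]
  have R : ∀ k ∈ range (p+1),
      C (b (p + 1 - 1 - k)) * (X - 1) ^ (p - (p + 1 - 1 - k)) = C (b (p - k)) * (X - 1) ^ k := by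
    intro k hk
    rw [Finset.mem_range] at hk
    have h1 : p + 1 - 1 - k = p - k := by omega
    have h2 : p - (p - k) = k := by omega
    rw [h1, h2]
  rw [Finset.sum_congr rfl L, Finset.sum_congr rfl R]
  ext n
  have hX1 : (X - 1 : ℚ[X]) = X + Polynomial.C (-1 : ℚ) := by
    rw [map_neg, map_one]; ring
  simp only [Polynomial.finset_sum_coeff, Polynomial.coeff_C_mul, Polynomial.coeff_X_pow,
    hX1, Polynomial.coeff_X_add_C_pow, mul_ite, mul_one, mul_zero]
  rw [Finset.sum_ite_eq]
  by_cases hn : n ≤ p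
  · rw [if_pos (Finset.mem_range.mpr (by omega))]
    set i := p - n with hi
    rw [← Finset.sum_range_reflect
      (fun k => b (p - k) * ((-1:ℚ) ^ (k - n) * ((k.choose n : ℕ) : ℚ))) (p+1)]
    have hz : ∀ k ∈ range (p+1), k ∉ range (i+1) →
        b (p - (p + 1 - 1 - k)) * ((-1:ℚ) ^ ((p + 1 - 1 - k) - n) * (((p + 1 - 1 - k).choose n : ℕ) : ℚ)) = 0 := by
      intro k hk hk'
      rw [Finset.mem_range] at hk hk'
      have : (p + 1 - 1 - k).choose n = 0 := Nat.choose_eq_zero_of_lt (by omega)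
      rw [this]
      simp
    rw [← Finset.sum_subset (Finset.range_subset_range.mpr (by omega : i + 1 ≤ p + 1)) hz]
    have termfix : ∀ j ∈ range (i+1),
        b (p - (p + 1 - 1 - j)) * ((-1:ℚ) ^ ((p + 1 - 1 - j) - n) * (((p + 1 - 1 - j).choose n : ℕ) : ℚ))
        = (-1:ℚ)^(i-j) * ((p.choose j : ℚ) * ((2*l-p+1).choose j : ℚ) / (l.choose j : ℚ))
            * (((p-j).choose (i-j) : ℕ) : ℚ) := by
      intro j hj
      rw [Finset.mem_range] at hj
      have h1 : p - (p + 1 - 1 - j) = j := by omega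
      have h2 : p + 1 - 1 - j = p - j := by omega
      have h3 : (p - j) - n = i - j := by omega
      have h4 : (p - j).choose n = (p - j).choose (i - j) := by
        rw [← h3, Nat.choose_symm (by omega)]
      rw [h1, h2, h3, h4, hb]
      ring
    rw [Finset.sum_congr rfl termfix, lemC l p i (by omega) hpl, ha]
  · rw [if_neg (by simp [Finset.mem_range]; omega)]
    symm
    apply Finset.sum_eq_zero
    intro k hk
    rw [Finset.mem_range] at hk
    rw [Nat.choose_eq_zero_of_lt (by omega)]
    simp
end

section
/- For integers 0 ≤ p ≤ l, the identity Σ_{s=0}^{l} C(l,s)·[Σ_{j=0}^{p} (−1)^j C(p,j) C(2l−p+1, j) C(l,j)^{−2} C(s,j)]·α^s = (1+α)^{l−p}·Σ_{i=0}^{p} (−1)^i C(p,i) C(l−p+i, i) C(l,i)^{−1} α^i holds as polynomials in α over ℚ. -/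
open Finset Polynomial

/-- Core combinatorial identity (Chu–Vandermonde style). -/
lemma core_id : ∀ (m n i : ℕ), i ≤ m →
    ∑ j ∈ range (i + 1), (-1 : ℚ) ^ j * ((n + m + 1).choose j : ℚ) * ((m - j).choose (i - j) : ℚ)
      = (-1 : ℚ) ^ i * ((n + i).choose i : ℚ) := by
  intro m
  induction m with
  | zero => intro n i hi; interval_cases i; simp
  | succ m ih =>
    intro n i hi
    cases i with
    | zero => simp
    | succ k =>
      have hkm : k ≤ m := by omega
      rw [Finset.sum_range_succ]
      have hsplit : ∀ j ∈ range (k + 1),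
          (-1 : ℚ) ^ j * ((n + (m+1) + 1).choose j : ℚ) * ((m + 1 - j).choose (k + 1 - j) : ℚ)
            = (-1 : ℚ) ^ j * ((n + 1 + m + 1).choose j : ℚ) * ((m - j).choose (k - j) : ℚ)
              + (-1 : ℚ) ^ j * ((n + 1 + m + 1).choose j : ℚ) * ((m - j).choose (k + 1 - j) : ℚ) := by
        intro j hj
        simp only [mem_range] at hj
        have h2 : m + 1 - j = (m - j) + 1 := by omega
        have h3 : k + 1 - j = (k - j) + 1 := by omega
        have h4 : n + (m + 1) + 1 = n + 1 + m + 1 := by omega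
        rw [h2, h3, h4, Nat.choose_succ_succ']
        push_cast
        rw [← h3]
        ring
      rw [Finset.sum_congr rfl hsplit, Finset.sum_add_distrib]
      have first : ∑ j ∈ range (k + 1),
          (-1 : ℚ) ^ j * ((n + 1 + m + 1).choose j : ℚ) * ((m - j).choose (k - j) : ℚ)
            = (-1 : ℚ) ^ k * ((n + 1 + k).choose k : ℚ) := ih (n+1) k hkm
      rw [first]
      rcases Nat.lt_or_ge k m with hklt | hge
      · -- case k + 1 ≤ m
        have hik : k + 1 ≤ m := hklt
        have second := ih (n+1) (k+1) hik
        rw [Finset.sum_range_succ] at second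
        have hlast : ((m - (k+1)).choose (k + 1 - (k+1)) : ℚ) = 1 := by
          simp
        rw [hlast, mul_one] at second
        have : ∑ j ∈ range (k + 1),
            (-1 : ℚ) ^ j * ((n + 1 + m + 1).choose j : ℚ) * ((m - j).choose (k + 1 - j) : ℚ)
              = (-1 : ℚ) ^ (k+1) * ((n + 1 + (k+1)).choose (k+1) : ℚ)
                - (-1 : ℚ) ^ (k+1) * ((n + 1 + m + 1).choose (k+1) : ℚ) := by
          linarith [second]
        rw [this]
        have hsimp1 : m + 1 - (k+1) = m - k := by omega
        have hsimp2 : k + 1 - (k+1) = 0 := by omega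
        rw [hsimp1, hsimp2, Nat.choose_zero_right]
        have hpascal : ((n + 1 + (k+1)).choose (k+1) : ℚ)
            = ((n + k + 1).choose k : ℚ) + ((n + k + 1).choose (k+1) : ℚ) := by
          have h5 : n + 1 + (k+1) = (n + k + 1) + 1 := by omega
          rw [h5, Nat.choose_succ_succ']
          push_cast; ring
        have h6 : n + (m+1) + 1 = n + 1 + m + 1 := by omega
        have h7 : n + 1 + k = n + k + 1 := by omega
        rw [h6, h7, hpascal]
        have h8 : n + (k+1) = n + k + 1 := by omega
        rw [h8]
        push_cast
        ring
      · -- case k = m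
        have hkm' : k = m := le_antisymm hkm hge
        subst hkm'
        have zero2 : ∑ j ∈ range (k + 1),
            (-1 : ℚ) ^ j * ((n + 1 + k + 1).choose j : ℚ) * ((k - j).choose (k + 1 - j) : ℚ) = 0 := by
          apply Finset.sum_eq_zero
          intro j hj
          simp only [mem_range] at hj
          have : (k - j).choose (k + 1 - j) = 0 := by
            apply Nat.choose_eq_zero_of_lt; omega
          rw [this]; simp
        rw [zero2, add_zero]
        have hsimp1 : k + 1 - (k+1) = 0 := by omega
        rw [hsimp1, Nat.choose_zero_right]
        have hpascal : ((n + (k+1) + 1).choose (k+1) : ℚ)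
            = ((n + k + 1).choose k : ℚ) + ((n + k + 1).choose (k+1) : ℚ) := by
          have h5 : n + (k+1) + 1 = (n + k + 1) + 1 := by omega
          rw [h5, Nat.choose_succ_succ']
          push_cast; ring
        rw [hpascal]
        have h7 : n + 1 + k = n + k + 1 := by omega
        have h8 : n + (k+1) = n + k + 1 := by omega
        rw [h7, h8]
        push_cast
        ring

lemma lemA(l p i : ℕ) (hip : i ≤ p) (hpl : p ≤ l) :
    ∑ j ∈ range (i + 1),
        (-1 : ℚ) ^ j * (p.choose j * (2 * l - p + 1).choose j : ℚ) / (l.choose j : ℚ)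
          * ((p - j).choose (i - j) : ℚ)
      = (-1 : ℚ) ^ i * (p.choose i * (l - p + i).choose i : ℚ) / (l.choose i : ℚ) := by
  have hli : (l.choose i : ℚ) ≠ 0 := Nat.cast_ne_zero.mpr (Nat.choose_pos (hip.trans hpl)).ne'
  have key : ∀ j ∈ range (i + 1),
      (-1 : ℚ) ^ j * (p.choose j * (2 * l - p + 1).choose j : ℚ) / (l.choose j : ℚ)
          * ((p - j).choose (i - j) : ℚ)
        = (p.choose i : ℚ) / (l.choose i : ℚ) *
            ((-1 : ℚ) ^ j * ((l - p + l + 1).choose j : ℚ) * ((l - j).choose (i - j) : ℚ)) := by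
    intro j hj
    simp only [mem_range] at hj
    have hji : j ≤ i := by omega
    have hlj : (l.choose j : ℚ) ≠ 0 := Nat.cast_ne_zero.mpr (Nat.choose_pos (by omega : j ≤ l)).ne'
    have hN : 2 * l - p + 1 = l - p + l + 1 := by omega
    have e1 : (p.choose i : ℚ) * (i.choose j : ℚ) = (p.choose j : ℚ) * ((p - j).choose (i - j) : ℚ) := by
      exact_mod_cast congrArg (Nat.cast : ℕ → ℚ) (Nat.choose_mul hji)
    have e2 : (l.choose i : ℚ) * (i.choose j : ℚ) = (l.choose j : ℚ) * ((l - j).choose (i - j) : ℚ) := by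
      exact_mod_cast congrArg (Nat.cast : ℕ → ℚ) (Nat.choose_mul (n := l) hji)
    rw [hN]
    field_simp
    linear_combination (-(((l - p + l + 1).choose j : ℚ)) * (l.choose i : ℚ)) * e1
      + ((((l - p + l + 1).choose j : ℚ)) * (p.choose i : ℚ)) * e2
  rw [Finset.sum_congr rfl key, ← Finset.mul_sum, core_id l (l - p) i (hip.trans hpl)]
  ring

lemma binom_poly (n : ℕ) :
    ((1 + X : ℚ[X])) ^ n = ∑ t ∈ range (n + 1), C ((n.choose t : ℚ)) * X ^ t := by
  rw [add_comm, add_pow]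
  apply Finset.sum_congr rfl
  intro t ht
  simp [mul_comm, C_eq_natCast]

lemma L1 (l j : ℕ) (hj : j ≤ l) :
    ∑ s ∈ range (l + 1), C ((l.choose s * s.choose j : ℚ)) * X ^ s
      = C ((l.choose j : ℚ)) * X ^ j * (1 + X) ^ (l - j) := by
  have hsub : ∑ s ∈ range (l + 1), C ((l.choose s * s.choose j : ℚ)) * X ^ s
      = ∑ s ∈ Ico j (l + 1), C ((l.choose s * s.choose j : ℚ)) * X ^ s := by
    symm
    apply Finset.sum_subset
    · intro x hx; simp only [mem_Ico, mem_range] at *; omega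
    · intro x hx hx'
      simp only [mem_Ico, mem_range] at *
      have : x.choose j = 0 := Nat.choose_eq_zero_of_lt (by omega)
      simp [this]
  rw [hsub, Finset.sum_Ico_eq_sum_range]
  have hrange : l + 1 - j = (l - j) + 1 := by omega
  rw [hrange, binom_poly, Finset.mul_sum]
  apply Finset.sum_congr rfl
  intro t ht
  simp only [mem_range] at ht
  have hc : l.choose (j + t) * (j + t).choose j = l.choose j * (l - j).choose t := by
    have := Nat.choose_mul (n := l) (k := j + t) (s := j) (by omega)
    simpa using this
  rw [← Nat.cast_mul, hc, Nat.cast_mul, C_mul, pow_add]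
  ring

lemma step3(l p : ℕ) (hpl : p ≤ l) :
    ∑ j ∈ range (p + 1),
        C ((-1 : ℚ) ^ j * (p.choose j * (2 * l - p + 1).choose j : ℚ) / (l.choose j : ℚ))
          * X ^ j * (1 + X) ^ (p - j)
      = ∑ i ∈ range (p + 1),
          C ((-1 : ℚ) ^ i * (p.choose i * (l - p + i).choose i : ℚ) / (l.choose i : ℚ)) * X ^ i := by
  ext n
  rw [finset_sum_coeff, finset_sum_coeff]
  simp only [mul_assoc, coeff_C_mul]
  have hL : ∀ j ∈ range (p + 1),
      ((X : ℚ[X]) ^ j * (1 + X) ^ (p - j)).coeff n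
        = if j ≤ n then ((p - j).choose (n - j) : ℚ) else 0 := by
    intro j hj
    rw [mul_comm, coeff_mul_X_pow']
    split_ifs with h
    · rw [coeff_one_add_X_pow]
    · rfl
  simp only [coeff_X_pow]
  rw [Finset.sum_congr rfl (fun j hj => by rw [hL j hj])]
  rcases Nat.lt_or_ge p n with hpn | hnp
  · -- n > p : both sides 0
    rw [Finset.sum_eq_zero, Finset.sum_eq_zero]
    · intro i hi; simp only [mem_range] at hi
      have : n ≠ i := by omega
      simp [this]
    · intro j hj; simp only [mem_range] at hj
      split_ifs with h
      · have : (p - j).choose (n - j) = 0 := Nat.choose_eq_zero_of_lt (by omega)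
        simp [this]
      · simp
  · -- n ≤ p
    have hRs : ∑ i ∈ range (p + 1),
        (-1 : ℚ) ^ i * (p.choose i * (l - p + i).choose i : ℚ) / (l.choose i : ℚ)
          * (if n = i then (1:ℚ) else 0)
        = (-1 : ℚ) ^ n * (p.choose n * (l - p + n).choose n : ℚ) / (l.choose n : ℚ) := by
      rw [Finset.sum_eq_single n]
      · simp
      · intro b _ hb; simp [Ne.symm hb]
      · intro h; exact absurd (mem_range.mpr (by omega)) h
    rw [hRs]
    have hLs : ∑ j ∈ range (p + 1),
        (-1 : ℚ) ^ j * (p.choose j * (2 * l - p + 1).choose j : ℚ) / (l.choose j : ℚ)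
          * (if j ≤ n then ((p - j).choose (n - j) : ℚ) else 0)
        = ∑ j ∈ range (n + 1),
            (-1 : ℚ) ^ j * (p.choose j * (2 * l - p + 1).choose j : ℚ) / (l.choose j : ℚ)
              * ((p - j).choose (n - j) : ℚ) := by
      rw [← Finset.sum_subset (Finset.range_subset_range.mpr (by omega : n + 1 ≤ p + 1))]
      · apply Finset.sum_congr rfl
        intro j hj; simp only [mem_range] at hj
        rw [if_pos (by omega)]
      · intro j hj hj'
        simp only [mem_range] at hj hj'
        rw [if_neg (by omega), mul_zero]
    rw [hLs, lemA l p n hnp hpl]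

/-- Theorem 3.3 of the paper: `Σ_s C(l,s)·Q_p(s)·α^s = (1+α)^{l−p}·G_p^l(α)`
as polynomials in `α` over `ℚ`. -/
theorem hahn_jacobi_identity (l p : ℕ) (hpl : p ≤ l) :
    ∑ s ∈ range (l + 1),
        C ((l.choose s : ℚ) *
            ∑ j ∈ range (p + 1), (-1 : ℚ) ^ j *
              (p.choose j * (2 * l - p + 1).choose j * s.choose j : ℚ) / (l.choose j : ℚ) ^ 2) *
          X ^ s
      = (1 + X) ^ (l - p) *
          ∑ i ∈ range (p + 1),
            C ((-1 : ℚ) ^ i * (p.choose i * (l - p + i).choose i : ℚ) / (l.choose i : ℚ)) *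
              X ^ i := by
  have hstep1 : ∀ s ∈ range (l + 1),
      C ((l.choose s : ℚ) *
          ∑ j ∈ range (p + 1), (-1 : ℚ) ^ j *
            (p.choose j * (2 * l - p + 1).choose j * s.choose j : ℚ) / (l.choose j : ℚ) ^ 2) *
        X ^ s
      = ∑ j ∈ range (p + 1),
          C ((-1 : ℚ) ^ j * (p.choose j * (2 * l - p + 1).choose j : ℚ) / (l.choose j : ℚ) ^ 2)
            * (C ((l.choose s * s.choose j : ℚ)) * X ^ s) := by
    intro s _
    rw [Finset.mul_sum, map_sum, Finset.sum_mul]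
    apply Finset.sum_congr rfl
    intro j _
    simp only [← mul_assoc, ← C_mul]
    congr 1
    ring
  rw [Finset.sum_congr rfl hstep1, Finset.sum_comm]
  have hstep2 : ∀ j ∈ range (p + 1),
      ∑ s ∈ range (l + 1),
          C ((-1 : ℚ) ^ j * (p.choose j * (2 * l - p + 1).choose j : ℚ) / (l.choose j : ℚ) ^ 2)
            * (C ((l.choose s * s.choose j : ℚ)) * X ^ s)
        = C ((-1 : ℚ) ^ j * (p.choose j * (2 * l - p + 1).choose j : ℚ) / (l.choose j : ℚ))
            * X ^ j * (1 + X) ^ (p - j) * (1 + X) ^ (l - p) := by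
    intro j hj
    simp only [mem_range] at hj
    have hjl : j ≤ l := by omega
    rw [← Finset.mul_sum, L1 l j hjl]
    have hClj : (l.choose j : ℚ) ≠ 0 := Nat.cast_ne_zero.mpr (Nat.choose_pos hjl).ne'
    have hCmul : C ((-1 : ℚ) ^ j * (p.choose j * (2 * l - p + 1).choose j : ℚ) / (l.choose j : ℚ) ^ 2)
        * C ((l.choose j : ℚ))
        = C ((-1 : ℚ) ^ j * (p.choose j * (2 * l - p + 1).choose j : ℚ) / (l.choose j : ℚ)) := by
      rw [← C_mul]
      congr 1
      field_simp
    have hpow : ((1 : ℚ[X]) + X) ^ (l - j) = (1 + X) ^ (p - j) * (1 + X) ^ (l - p) := by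
      rw [← pow_add]
      congr 1
      omega
    rw [hpow, ← hCmul]
    ring
  rw [Finset.sum_congr rfl hstep2, ← Finset.sum_mul, step3 l p hpl]
  ring
end

section
/- For the left side of the n=2 transition polynomial: Σ_{s=0}^{l} C(l,s)·Q_p(s)·α^s = Σ_{j=0}^{p} (−1)^j C(p,j) C(2l−p+1,j) C(l,j)^{−1} α^j (1+α)^{l−j}, where Q_p(s) = Σ_{j=0}^{p} (−1)^j C(p,j) C(2l−p+1,j) C(l,j)^{−2} C(s,j), for 0 ≤ p ≤ l. -/
open Finset Polynomial

lemma key_vandermonde (l j : ℕ) (hj : j ≤ l) :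
    ∑ s ∈ range (l + 1), C ((l.choose s : ℚ) * (s.choose j : ℚ)) * X ^ s
      = C ((l.choose j : ℚ)) * X ^ j * (1 + X) ^ (l - j) := by
  have hrhs : (1 + X : ℚ[X]) ^ (l - j) =
      ∑ t ∈ range (l - j + 1), C (((l - j).choose t : ℚ)) * X ^ t := by
    rw [add_comm, add_pow]
    apply Finset.sum_congr rfl
    intro t _
    rw [one_pow]
    ring_nf
    simp [C_eq_natCast, mul_comm]
  rw [hrhs, Finset.mul_sum]
  rw [Finset.range_eq_Ico, ← Finset.sum_Ico_consecutive _ (Nat.zero_le j) (by omega : j ≤ l + 1)]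
  have h1 : ∑ s ∈ Finset.Ico 0 j, C ((l.choose s : ℚ) * (s.choose j : ℚ)) * X ^ s = 0 := by
    apply Finset.sum_eq_zero
    intro s hs
    simp only [Finset.mem_Ico] at hs
    rw [Nat.choose_eq_zero_of_lt hs.2]
    simp
  rw [h1, zero_add, Finset.sum_Ico_eq_sum_range]
  have hlen : l + 1 - j = l - j + 1 := by omega
  rw [hlen]
  apply Finset.sum_congr rfl
  intro t ht
  simp only [Finset.mem_range] at ht
  have htl : j + t ≤ l := by omega
  have hcm : l.choose (j + t) * (j + t).choose j = l.choose j * (l - j).choose t := by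
    have := Nat.choose_mul (n := l) (k := j + t) (s := j) (Nat.le_add_right j t)
    simpa using this
  have hc : ((l.choose (j + t) : ℚ) * ((j + t).choose j : ℚ))
      = (l.choose j : ℚ) * ((l - j).choose t : ℚ) := by
    exact_mod_cast congrArg (Nat.cast : ℕ → ℚ) hcm
  rw [hc, map_mul, pow_add]
  ring

/-- `Σ_{s=0}^{l} C(l,s)·Q_p(s)·α^s = Σ_{j=0}^{p} (−1)^j C(p,j)C(2l−p+1,j)C(l,j)^{−1} α^j (1+α)^{l−j}`,
where `Q_p(s) = Σ_{j=0}^{p} (−1)^j C(p,j)C(2l−p+1,j)C(l,j)^{−2}C(s,j)`, as polynomials in `α` over `ℚ`. -/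
theorem hahn_sum_expansion (l p : ℕ) (hpl : p ≤ l) :
    ∑ s ∈ range (l + 1),
        C ((l.choose s : ℚ) *
            ∑ j ∈ range (p + 1), (-1 : ℚ) ^ j *
              (p.choose j * (2 * l - p + 1).choose j * s.choose j : ℚ) / (l.choose j : ℚ) ^ 2) *
          X ^ s
      = ∑ j ∈ range (p + 1),
          C ((-1 : ℚ) ^ j * (p.choose j * (2 * l - p + 1).choose j : ℚ) / (l.choose j : ℚ)) *
            X ^ j * (1 + X) ^ (l - j) := by
  have lhs_eq : ∀ s, ((l.choose s : ℚ) *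
      ∑ j ∈ range (p + 1), (-1 : ℚ) ^ j *
        (p.choose j * (2 * l - p + 1).choose j * s.choose j : ℚ) / (l.choose j : ℚ) ^ 2)
      = ∑ j ∈ range (p + 1),
          ((-1 : ℚ) ^ j * (p.choose j * (2 * l - p + 1).choose j : ℚ) / (l.choose j : ℚ) ^ 2) *
            ((l.choose s : ℚ) * (s.choose j : ℚ)) := by
    intro s
    rw [Finset.mul_sum]
    apply Finset.sum_congr rfl
    intro j _
    ring
  calc
    _ = ∑ s ∈ range (l + 1), ∑ j ∈ range (p + 1),
          C ((-1 : ℚ) ^ j * (p.choose j * (2 * l - p + 1).choose j : ℚ) / (l.choose j : ℚ) ^ 2) *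
            (C ((l.choose s : ℚ) * (s.choose j : ℚ)) * X ^ s) := by
        apply Finset.sum_congr rfl
        intro s _
        rw [lhs_eq s, map_sum, Finset.sum_mul]
        apply Finset.sum_congr rfl
        intro j _
        rw [map_mul]
        ring
    _ = ∑ j ∈ range (p + 1),
          C ((-1 : ℚ) ^ j * (p.choose j * (2 * l - p + 1).choose j : ℚ) / (l.choose j : ℚ) ^ 2) *
            ∑ s ∈ range (l + 1), C ((l.choose s : ℚ) * (s.choose j : ℚ)) * X ^ s := by
        rw [Finset.sum_comm]
        simp [Finset.mul_sum]
    _ = _ := by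
        apply Finset.sum_congr rfl
        intro j hj
        simp only [Finset.mem_range] at hj
        have hjl : j ≤ l := by omega
        rw [key_vandermonde l j hjl]
        have hne : (l.choose j : ℚ) ≠ 0 := by
          exact_mod_cast Nat.choose_pos hjl |>.ne'
        have hc : ((-1 : ℚ) ^ j * ((p.choose j : ℚ) * ((2 * l - p + 1).choose j : ℚ)) /
              (l.choose j : ℚ) ^ 2) * (l.choose j : ℚ)
            = (-1 : ℚ) ^ j * ((p.choose j : ℚ) * ((2 * l - p + 1).choose j : ℚ)) /
              (l.choose j : ℚ) := by
          field_simp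
        rw [← hc, map_mul]
        ring
end

section
/- For a permutation h of {1,…,nl} preserving each residue class mod l (i.e., h(x) ≡ x mod l for all x), and K the subgroup of S_{nl} preserving each block {(q−1)l+1,…,ql}: (1/|K|)·Σ_{k∈K} fix(kh) = (1/l)·fix(h), where fix denotes the number of fixed points on {1,…,nl}, provided l ≥ 1. -/
open Finset

def rowGroup (n l : ℕ) : Subgroup (Equiv.Perm (Fin n × Fin l)) where
  carrier := {k | ∀ p, (k p).1 = p.1}
  mul_mem' := by
    intro a b ha hb p
    simp only [Equiv.Perm.mul_apply]
    rw [ha, hb]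
  one_mem' := fun p => rfl
  inv_mem' := by
    intro a ha p
    have := ha (a⁻¹ p)
    simpa using this.symm

example (n l : ℕ) (p : Fin n × Fin l) (k : rowGroup n l) : k • p = (k : Equiv.Perm (Fin n × Fin l)) p := rfl

lemma orbit_rowGroup (n l : ℕ) (p : Fin n × Fin l) :
    MulAction.orbit (rowGroup n l) p = {x | x.1 = p.1} := by
  ext x
  constructor
  · rintro ⟨k, rfl⟩
    exact k.2 p
  · intro hx
    refine ⟨⟨Equiv.prodCongrRight (fun _ => Equiv.swap p.2 x.2), fun q => rfl⟩, ?_⟩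
    show (Equiv.prodCongrRight (fun _ => Equiv.swap p.2 x.2)) p = x
    exact Prod.ext hx.symm (Equiv.swap_apply_left p.2 x.2)

lemma stab_card (n l : ℕ) (p : Fin n × Fin l) :
    (univ.filter (fun k : Equiv.Perm (Fin n × Fin l) =>
      (∀ q, (k q).1 = q.1) ∧ k p = p)).card * l
      = (univ.filter (fun k : Equiv.Perm (Fin n × Fin l) => ∀ q, (k q).1 = q.1)).card := by
  classical
  have h1 : Nat.card (MulAction.orbit (rowGroup n l) p) *
      Nat.card (MulAction.stabilizer (rowGroup n l) p) = Nat.card (rowGroup n l) := by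
    simp only [Nat.card_eq_fintype_card]
    exact MulAction.card_orbit_mul_card_stabilizer_eq_card_group _ p
  have horb : Nat.card (MulAction.orbit (rowGroup n l) p) = l := by
    rw [orbit_rowGroup]
    have e : {x : Fin n × Fin l // x.1 = p.1} ≃ Fin l :=
      { toFun := fun x => x.1.2
        invFun := fun b => ⟨(p.1, b), rfl⟩
        left_inv := fun x => Subtype.ext (Prod.ext x.2.symm rfl)
        right_inv := fun b => rfl }
    exact (Nat.card_congr e).trans (by simp)
  have hK : Nat.card (rowGroup n l)
      = (univ.filter (fun k : Equiv.Perm (Fin n × Fin l) => ∀ q, (k q).1 = q.1)).card := by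
    rw [Nat.card_eq_fintype_card]
    rw [← Fintype.card_coe]
    refine Fintype.card_congr (Equiv.subtypeEquivRight ?_)
    intro k
    simp [rowGroup]
  have hstab : Nat.card (MulAction.stabilizer (rowGroup n l) p)
      = (univ.filter (fun k : Equiv.Perm (Fin n × Fin l) =>
          (∀ q, (k q).1 = q.1) ∧ k p = p)).card := by
    have e2 : MulAction.stabilizer (rowGroup n l) p ≃
        {k : Equiv.Perm (Fin n × Fin l) // (∀ q, (k q).1 = q.1) ∧ k p = p} :=
      { toFun := fun x => ⟨x.1.1, x.1.2, x.2⟩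
        invFun := fun k => ⟨⟨k.1, k.2.1⟩, k.2.2⟩
        left_inv := fun _ => rfl
        right_inv := fun _ => rfl }
    rw [Nat.card_congr e2, Nat.card_eq_fintype_card, ← Fintype.card_coe]
    refine Fintype.card_congr (Equiv.subtypeEquivRight ?_)
    intro k
    simp
  rw [← hK, ← h1, horb, ← hstab, Nat.mul_comm]

/-- Number of fixed points of a permutation. -/
def fixCount {β : Type*} [Fintype β] [DecidableEq β] (σ : Equiv.Perm β) : ℕ :=
  (Finset.univ.filter fun x => σ x = x).card

/-- Model `[nl]` as `Fin n × Fin l`: the block of `(q, x)` is `q` (row group `K`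
preserves it), and the residue class mod `l` of `(q, x)` is `x` (the column group
`H` preserves it).  For `h ∈ H`, `(1/|K|)·Σ_{k∈K} fix(kh) = (1/l)·fix(h)`. -/
theorem average_fix_over_row_group (n l : ℕ) (hl : 0 < l)
    (h : Equiv.Perm (Fin n × Fin l)) (hH : ∀ p, (h p).2 = p.2) :
    (∑ k ∈ Finset.univ.filter
        (fun k : Equiv.Perm (Fin n × Fin l) => ∀ p, (k p).1 = p.1),
        (fixCount (k * h) : ℚ)) /
      ((Finset.univ.filter
        (fun k : Equiv.Perm (Fin n × Fin l) => ∀ p, (k p).1 = p.1)).card : ℚ)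
      = (fixCount h : ℚ) / (l : ℚ) := by
  classical
  set F := Finset.univ.filter
      (fun k : Equiv.Perm (Fin n × Fin l) => ∀ p, (k p).1 = p.1) with hF
  have hFpos : 0 < F.card := Finset.card_pos.mpr ⟨1, by simp [hF]⟩
  have key : ∀ p : Fin n × Fin l, (F.filter fun k => k (h p) = p).card =
      if h p = p then (F.filter fun k => k p = p).card else 0 := by
    intro p
    by_cases hp : h p = p
    · rw [if_pos hp, hp]
    · rw [if_neg hp, Finset.card_eq_zero, Finset.filter_eq_empty_iff]
      intro k hk hkp
      have hk1 : ∀ q : Fin n × Fin l, (k q).1 = q.1 := by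
        rw [hF, Finset.mem_filter] at hk; exact hk.2
      apply hp
      have h1 : (h p).1 = p.1 := by rw [← hk1 (h p), hkp]
      exact Prod.ext h1 (hH p)
  have main : l * ∑ k ∈ F, fixCount (k * h) = fixCount h * F.card := by
    simp only [fixCount, Finset.card_filter]
    rw [Finset.sum_comm, Finset.mul_sum, Finset.sum_mul]
    refine Finset.sum_congr rfl ?_
    intro p _
    rw [← Finset.card_filter, show (F.filter fun k => (k * h) p = p).card = (F.filter fun k => k (h p) = p).card from rfl, key p]
    by_cases hp : h p = p
    · rw [if_pos hp, if_pos hp, one_mul]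
      have hs := stab_card n l p
      rw [hF, Finset.filter_filter] at *
      rw [mul_comm]
      exact hs
    · simp [hp]
  have mainQ : (l : ℚ) * ∑ k ∈ F, (fixCount (k * h) : ℚ)
      = (fixCount h : ℚ) * (F.card : ℚ) := by
    exact_mod_cast congrArg (Nat.cast : ℕ → ℚ) main
  rw [div_eq_div_iff (by exact_mod_cast hFpos.ne') (by exact_mod_cast hl.ne')]
  linarith [mainQ]
end
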